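/- arXiv:1611.07816 — 2 statements merged into one kernel-verified Lean document; each statement's English description precedes it below -/
import Mathlib

section
/- Let Q = I_1 × ··· × I_d be a box in ℝ^d, let S be a face of Q orthogonal to the i-th coordinate direction, let a be a vertex of Q not on S, and set γ(x) = (x_i − a_i)e_i. Then for every v ∈ W^{1,1}(Q), the average of v over S minus the average of v over Q equals the average over Q of γ·∇v, i.e., (1/|S|)∫_S v − (1/|Q|)∫_Q v = (1/|Q|)∫_Q γ·∇v. -/
open MeasureTheory

/-- Embedding of the face of the box orthogonal to direction `i` at height `c`:
a point of the face is determined by its remaining `d−1` coordinates. -/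
def faceEmb {d : ℕ} (i : Fin d) (c : ℝ) (z : {j : Fin d // j ≠ i} → ℝ) :
    Fin d → ℝ :=
  fun j => if h : j = i then c else z ⟨j, h⟩

section helpers
variable {d : ℕ} (i : Fin d)

variable {d : ℕ} (i : Fin d)

@[simp] lemma faceEmb_apply_self (c : ℝ) (z : {j : Fin d // j ≠ i} → ℝ) :
    faceEmb i c z i = c := dif_pos rfl

noncomputable def splitEquiv : (ℝ × ({j : Fin d // j ≠ i} → ℝ)) ≃ᵐ (Fin d → ℝ) :=
  ((MeasurableEquiv.funUnique {j : Fin d // j = i} ℝ).symm.prodCongr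
    (MeasurableEquiv.refl _)).trans
    (MeasurableEquiv.piEquivPiSubtypeProd (fun _ : Fin d => ℝ) (· = i)).symm

lemma splitEquiv_coe :
    ⇑(splitEquiv i) = fun p : ℝ × ({j : Fin d // j ≠ i} → ℝ) => faceEmb i p.1 p.2 := by
  funext p j
  simp [splitEquiv, faceEmb, MeasurableEquiv.piEquivPiSubtypeProd,
    Equiv.piEquivPiSubtypeProd, MeasurableEquiv.funUnique, Equiv.funUnique,
    MeasurableEquiv.prodCongr]

lemma splitEquiv_mp : MeasurePreserving (splitEquiv (d := d) i) volume volume := by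
  have h1 : MeasurePreserving
      (MeasurableEquiv.piEquivPiSubtypeProd (fun _ : Fin d => ℝ) (· = i)).symm
      volume volume := by
    convert (volume_preserving_piEquivPiSubtypeProd (fun _ : Fin d => ℝ) (· = i)).symm using 2
    congr!
    all_goals congr!
  have h2 : MeasurePreserving
      (⇑((MeasurableEquiv.funUnique {j : Fin d // j = i} ℝ).symm.prodCongr
        (MeasurableEquiv.refl ({j : Fin d // j ≠ i} → ℝ))))
      volume volume := by
    have := ((volume_preserving_funUnique {j : Fin d // j = i} ℝ).symm).prod
      (MeasurePreserving.id (volume : Measure ({j : Fin d // j ≠ i} → ℝ)))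
    convert this using 1 <;> rfl
  exact h1.comp h2

lemma continuous_faceEmbP :
    Continuous (fun p : ℝ × ({j : Fin d // j ≠ i} → ℝ) => faceEmb i p.1 p.2) := by
  apply continuous_pi
  intro j
  simp only [faceEmb]
  by_cases h : j = i
  · subst h; simp only [dif_pos]; fun_prop
  · simp only [dif_neg h]; fun_prop

lemma faceEmb_preimage (l u : Fin d → ℝ) :
    (fun p : ℝ × ({j : Fin d // j ≠ i} → ℝ) => faceEmb i p.1 p.2) ⁻¹'
      (Set.univ.pi fun j => Set.Icc (l j) (u j)) =
    (Set.Icc (l i) (u i)) ×ˢ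
      (Set.univ.pi fun j : {j : Fin d // j ≠ i} => Set.Icc (l j) (u j)) := by
  ext ⟨t, z⟩
  simp only [Set.mem_preimage, Set.mem_pi, Set.mem_univ, forall_true_left, Set.mem_prod]
  constructor
  · intro h
    refine ⟨?_, fun j => ?_⟩
    · have := h i; simpa [faceEmb] using this
    · have := h j.1; simpa [faceEmb, j.2] using this
  · rintro ⟨h1, h2⟩ j
    by_cases h : j = i
    · subst h; simpa [faceEmb] using h1
    · simpa [faceEmb, h] using h2 ⟨j, h⟩

end helpers

/-- Box average identity: let `Q = I 1 × ⋯ × I d` with `I j = [l j, u j]`, let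
`S` be the face of `Q` where `x i = u i`, let `a` be a vertex of `Q` not on `S`
(so `a i = l i`) and `γ(x) = (x i − l i) eᵢ`. Then for every `v ∈ W^{1,1}(Q)`
(stated for `C¹` functions `v`, dense in `W^{1,1}(Q)`),
`(1/|S|)∫_S v − (1/|Q|)∫_Q v = (1/|Q|)∫_Q γ·∇v`. -/
theorem face_average_sub_box_average (d : ℕ) (hd : 0 < d) (i : Fin d)
    (l u : Fin d → ℝ) (hlu : ∀ j, l j < u j)
    (v : (Fin d → ℝ) → ℝ) (hv : ContDiff ℝ 1 v) :
    (1 / ∏ j : {j : Fin d // j ≠ i}, (u j - l j)) *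
        (∫ z in Set.univ.pi fun j : {j : Fin d // j ≠ i} =>
          Set.Icc (l j) (u j), v (faceEmb i (u i) z))
      - (1 / ∏ j, (u j - l j)) *
        (∫ x in Set.univ.pi fun j => Set.Icc (l j) (u j), v x)
      = (1 / ∏ j, (u j - l j)) *
        ∫ x in Set.univ.pi fun j => Set.Icc (l j) (u j),
          (x i - l i) * fderiv ℝ v x (Pi.single i 1) := by
  classical
  set box : Set (Fin d → ℝ) := Set.univ.pi fun j => Set.Icc (l j) (u j) with hbox
  set piZ : Set ({j : Fin d // j ≠ i} → ℝ) :=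
    Set.univ.pi fun j : {j : Fin d // j ≠ i} => Set.Icc (l j) (u j) with hpiZ
  have hvc : Continuous v := hv.continuous
  have hDf : Continuous fun x : Fin d → ℝ => fderiv ℝ v x (Pi.single i 1) :=
    (hv.continuous_fderiv one_ne_zero).clm_apply continuous_const
  have hembc := continuous_faceEmbP i
  have hcompact : IsCompact ((Set.Icc (l i) (u i)) ×ˢ piZ) :=
    isCompact_Icc.prod (isCompact_univ_pi fun _ => isCompact_Icc)
  -- change of variables + Fubini for continuous integrands
  have hcov : ∀ G : (Fin d → ℝ) → ℝ, Continuous G →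
      (∫ x in box, G x) =
        ∫ z in piZ, ∫ t in Set.Icc (l i) (u i), G (faceEmb i t z) := by
    intro G hG
    have h1 := (splitEquiv_mp i).setIntegral_preimage_emb
      (splitEquiv i).measurableEmbedding G box
    rw [← h1, splitEquiv_coe, faceEmb_preimage]
    have hInt : Integrable (fun p : ℝ × ({j : Fin d // j ≠ i} → ℝ) => G (faceEmb i p.1 p.2))
        ((volume.restrict (Set.Icc (l i) (u i))).prod (volume.restrict piZ)) := by
      rw [Measure.prod_restrict]
      exact ContinuousOn.integrableOn_compact hcompact (hG.comp hembc).continuousOn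
    calc ∫ p in (Set.Icc (l i) (u i)) ×ˢ piZ, G (faceEmb i p.1 p.2)
        = ∫ p, G (faceEmb i p.1 p.2)
            ∂((volume.restrict (Set.Icc (l i) (u i))).prod (volume.restrict piZ)) := by
          rw [Measure.prod_restrict]; rfl
      _ = ∫ z in piZ, ∫ t in Set.Icc (l i) (u i), G (faceEmb i t z) :=
          integral_prod_symm _ hInt
  -- the per-fiber integration by parts
  have fiber : ∀ z : {j : Fin d // j ≠ i} → ℝ,
      ∫ t in Set.Icc (l i) (u i),
        (t - l i) * fderiv ℝ v (faceEmb i t z) (Pi.single i 1)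
      = (u i - l i) * v (faceEmb i (u i) z)
        - ∫ t in Set.Icc (l i) (u i), v (faceEmb i t z) := by
    intro z
    have hab := (hlu i).le
    have hline : Continuous fun t : ℝ => faceEmb i t z :=
      hembc.comp (continuous_id.prodMk continuous_const)
    have hg : ∀ t : ℝ, HasDerivAt (fun s => v (faceEmb i s z))
        (fderiv ℝ v (faceEmb i t z) (Pi.single i 1)) t := by
      intro t
      have h0 : (fun s : ℝ => faceEmb i s z)
          = fun s => faceEmb i 0 z + s • (Pi.single i 1 : Fin d → ℝ) := by
        funext s j
        by_cases h : j = i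
        · subst h; simp [faceEmb]
        · simp [faceEmb, h, Pi.single_eq_of_ne h]
      have hL : HasDerivAt (fun s : ℝ => faceEmb i s z) (Pi.single i 1) t := by
        rw [h0]
        simpa using ((hasDerivAt_id t).smul_const (Pi.single i 1 : Fin d → ℝ)).const_add
          (faceEmb i 0 z)
      exact (hv.differentiable one_ne_zero (faceEmb i t z)).hasFDerivAt.comp_hasDerivAt t hL
    rw [MeasureTheory.integral_Icc_eq_integral_Ioc, ← intervalIntegral.integral_of_le hab,
      MeasureTheory.integral_Icc_eq_integral_Ioc, ← intervalIntegral.integral_of_le hab]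
    have hparts := intervalIntegral.integral_mul_deriv_eq_deriv_mul
      (a := l i) (b := u i)
      (u := fun t => t - l i) (u' := fun _ => (1 : ℝ))
      (v := fun t => v (faceEmb i t z))
      (v' := fun t => fderiv ℝ v (faceEmb i t z) (Pi.single i 1))
      (fun t _ => (hasDerivAt_id t).sub_const (l i))
      (fun t _ => hg t)
      intervalIntegrable_const
      ((hDf.comp hline).intervalIntegrable _ _)
    simpa using hparts
  -- put things together
  have hintv : IntegrableOn (fun p : ℝ × ({j : Fin d // j ≠ i} → ℝ) => v (faceEmb i p.1 p.2))
      ((Set.Icc (l i) (u i)) ×ˢ piZ) :=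
      ContinuousOn.integrableOn_compact hcompact (hvc.comp hembc).continuousOn
  have key : (∫ x in box, (x i - l i) * fderiv ℝ v x (Pi.single i 1))
      = (u i - l i) * (∫ z in piZ, v (faceEmb i (u i) z)) - ∫ x in box, v x := by
    rw [hcov (fun x => (x i - l i) * fderiv ℝ v x (Pi.single i 1)) (((continuous_apply i).sub continuous_const).mul hDf), hcov v hvc]
    have : ∀ z : {j : Fin d // j ≠ i} → ℝ,
        (∫ t in Set.Icc (l i) (u i),
          (faceEmb i t z i - l i) * fderiv ℝ v (faceEmb i t z) (Pi.single i 1))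
        = (u i - l i) * v (faceEmb i (u i) z)
          - ∫ t in Set.Icc (l i) (u i), v (faceEmb i t z) := by
      intro z
      simp_rw [faceEmb_apply_self]
      exact fiber z
    rw [integral_congr_ae (Filter.Eventually.of_forall this)]
    have hI1 : IntegrableOn (fun z => (u i - l i) * v (faceEmb i (u i) z)) piZ := by
      apply ContinuousOn.integrableOn_compact (isCompact_univ_pi fun _ => isCompact_Icc)
      exact (continuous_const.mul
        (hvc.comp (hembc.comp (continuous_const.prodMk continuous_id)))).continuousOn
    have hI2 : IntegrableOn
        (fun z => ∫ t in Set.Icc (l i) (u i), v (faceEmb i t z)) piZ := by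
      have := hintv
      rw [IntegrableOn, Measure.volume_eq_prod, ← Measure.prod_restrict] at this
      exact this.swap.integral_prod_left
    rw [integral_sub hI1 hI2, integral_const_mul]
  -- final algebra
  have hT : (∏ j, (u j - l j)) = (u i - l i) * ∏ j : {j : Fin d // j ≠ i}, (u j - l j) := by
    rw [← Finset.mul_prod_erase Finset.univ _ (Finset.mem_univ i)]
    congr 1
    exact Finset.prod_subtype _ (by simp) _
  have hP : (0 : ℝ) < ∏ j : {j : Fin d // j ≠ i}, (u j - l j) :=
    Finset.prod_pos fun j _ => sub_pos.2 (hlu j)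
  have hui : (0 : ℝ) < u i - l i := sub_pos.2 (hlu i)
  rw [key, hT]
  field_simp
end

section
/- Weighted trace identity for boundary B-splines: with Q, S, β, γ and p as in the homogeneity setting (β a tensor-product function with β_i(x_i) = C|x_i−a_i|^p on Q, S a face where β does not vanish identically), for every w ∈ W^{1,1}(Q): (∫_S wβ)/(∫_S β) − (∫_Q wβ)/(∫_Q β) = (1/(p+1)) (∫_Q (γ·∇w) β)/(∫_Q β). -/
open MeasureTheory

@[simp] lemma faceEmb_same {d : ℕ} (i : Fin d) (c : ℝ) (z : {j : Fin d // j ≠ i} → ℝ) :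
    faceEmb i c z i = c := dif_pos rfl

@[simp] lemma faceEmb_ne {d : ℕ} {i j : Fin d} (h : j ≠ i) (c : ℝ)
    (z : {j : Fin d // j ≠ i} → ℝ) : faceEmb i c z j = z ⟨j, h⟩ := dif_neg h

lemma continuous_faceEmb_pair {d : ℕ} (i : Fin d) :
    Continuous (fun y : ({j : Fin d // j ≠ i} → ℝ) × ℝ => faceEmb i y.2 y.1) := by
  refine continuous_pi fun j => ?_
  rcases eq_or_ne j i with h | h
  · subst h; simpa using continuous_snd
  · simpa [h, Function.comp_def] using (continuous_apply (⟨j, h⟩ : {j : Fin d // j ≠ i})).comp continuous_fst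

lemma continuous_faceEmb_t {d : ℕ} (i : Fin d) (z : {j : Fin d // j ≠ i} → ℝ) :
    Continuous (fun t : ℝ => faceEmb i t z) :=
  (continuous_faceEmb_pair i).comp (Continuous.prodMk_right z)

lemma faceEmb_hasDerivAt {d : ℕ} (i : Fin d) (z : {j : Fin d // j ≠ i} → ℝ) (t : ℝ) :
    HasDerivAt (fun s : ℝ => faceEmb i s z) (Pi.single i 1) t := by
  have hrep : (fun s : ℝ => faceEmb i s z)
      = fun s : ℝ => faceEmb i 0 z + s • (Pi.single i 1 : Fin d → ℝ) := by
    funext s j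
    rcases eq_or_ne j i with h | h
    · subst h; simp
    · simp [h, Pi.single_eq_of_ne h]
  rw [hrep]
  simpa using ((hasDerivAt_id t).smul_const (Pi.single i 1 : Fin d → ℝ)).const_add
    (faceEmb i 0 z)

lemma prod_faceEmb {d : ℕ} (i : Fin d) (βf : Fin d → ℝ → ℝ) (t : ℝ)
    (z : {j : Fin d // j ≠ i} → ℝ) :
    ∏ k, βf k (faceEmb i t z k)
      = βf i t * ∏ j : {j : Fin d // j ≠ i}, βf j (z j) := by
  rw [← Finset.mul_prod_erase Finset.univ (fun k => βf k (faceEmb i t z k))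
      (Finset.mem_univ i)]
  congr 1
  · simp
  · rw [Finset.prod_subtype (Finset.univ.erase i)
        (p := fun j : Fin d => j ≠ i) (fun x => by simp)
        (fun k => βf k (faceEmb i t z k))]
    exact Finset.prod_congr rfl fun j _ => by simp [j.prop]

/-- Fubini: splitting the box integral at coordinate `i`. -/
lemma fubini_face {d : ℕ} (i : Fin d) (l u : Fin d → ℝ)
    (f : (Fin d → ℝ) → ℝ) (hf : Continuous f) :
    ∫ x in Set.univ.pi fun j => Set.Icc (l j) (u j), f x
      = ∫ z in Set.univ.pi fun j : {j : Fin d // j ≠ i} => Set.Icc (l j) (u j),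
          ∫ t in Set.Icc (l i) (u i), f (faceEmb i t z) := by
  classical
  letI : Unique {j : Fin d // ¬ j ≠ i} :=
    ⟨⟨⟨i, not_not_intro rfl⟩⟩, fun j => Subtype.ext (not_not.mp j.2)⟩
  let e := MeasurableEquiv.piEquivPiSubtypeProd (fun _ : Fin d => ℝ) (fun j => j ≠ i)
  let e2 := MeasurableEquiv.piUnique (fun _ : {j : Fin d // ¬ j ≠ i} => ℝ)
  let E := e.trans ((MeasurableEquiv.refl ({j : Fin d // j ≠ i} → ℝ)).prodCongr e2)
  have hE : ∀ x : Fin d → ℝ, E x = (fun j : {j : Fin d // j ≠ i} => x j, x i) :=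
    fun x => rfl
  have hmpE : MeasurePreserving (⇑E) volume volume := by
    have h1 := volume_preserving_piEquivPiSubtypeProd (fun _ : Fin d => ℝ) (fun j => j ≠ i)
    have h2 : MeasurePreserving (⇑e2) volume volume := volume_preserving_piUnique _
    have h3 : MeasurePreserving
        (Prod.map (id : ({j : Fin d // j ≠ i} → ℝ) → _) ⇑e2) volume volume := by
      rw [Measure.volume_eq_prod, Measure.volume_eq_prod]
      exact (MeasurePreserving.id volume).prod h2
    have hcomp : ⇑E = (Prod.map (id : ({j : Fin d // j ≠ i} → ℝ) → _) ⇑e2) ∘ ⇑e := rfl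
    rw [hcomp]
    exact h3.comp h1
  have hEface : ∀ x : Fin d → ℝ, faceEmb i (E x).2 (E x).1 = x := by
    intro x
    rw [hE]
    funext j
    rcases eq_or_ne j i with h | h
    · subst h; simp
    · simp [h]
  have hpre : ⇑E ⁻¹' ((Set.univ.pi fun j : {j : Fin d // j ≠ i} => Set.Icc (l j) (u j))
        ×ˢ Set.Icc (l i) (u i))
      = Set.univ.pi fun j => Set.Icc (l j) (u j) := by
    ext x
    simp only [Set.mem_preimage, hE, Set.mem_prod, Set.mem_pi, Set.mem_univ, true_implies,
      Set.mem_Icc]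
    constructor
    · rintro ⟨h1, h2⟩ j
      rcases eq_or_ne j i with h | h
      · subst h; exact h2
      · exact h1 ⟨j, h⟩
    · intro h; exact ⟨fun j => h j, h i⟩
  have hG : Continuous (fun y : ({j : Fin d // j ≠ i} → ℝ) × ℝ => f (faceEmb i y.2 y.1)) :=
    hf.comp (continuous_faceEmb_pair i)
  have hInt : IntegrableOn (fun y : ({j : Fin d // j ≠ i} → ℝ) × ℝ => f (faceEmb i y.2 y.1))
      ((Set.univ.pi fun j : {j : Fin d // j ≠ i} => Set.Icc (l j) (u j))
        ×ˢ Set.Icc (l i) (u i)) (volume.prod volume) := by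
    rw [← Measure.volume_eq_prod]
    exact hG.continuousOn.integrableOn_compact
      ((isCompact_univ_pi fun j => isCompact_Icc).prod isCompact_Icc)
  calc ∫ x in Set.univ.pi fun j => Set.Icc (l j) (u j), f x
      = ∫ x in ⇑E ⁻¹' ((Set.univ.pi fun j : {j : Fin d // j ≠ i} => Set.Icc (l j) (u j))
          ×ˢ Set.Icc (l i) (u i)), (fun y : ({j : Fin d // j ≠ i} → ℝ) × ℝ =>
            f (faceEmb i y.2 y.1)) (E x) := by
        rw [hpre]
        refine (setIntegral_congr_fun
          (MeasurableSet.univ_pi fun j => measurableSet_Icc) ?_)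
        intro x _
        simp only
        rw [hEface x]
    _ = ∫ y in (Set.univ.pi fun j : {j : Fin d // j ≠ i} => Set.Icc (l j) (u j))
          ×ˢ Set.Icc (l i) (u i), f (faceEmb i y.2 y.1) :=
        hmpE.setIntegral_preimage_emb E.measurableEmbedding
          (fun y : ({j : Fin d // j ≠ i} → ℝ) × ℝ => f (faceEmb i y.2 y.1)) _
    _ = ∫ z in Set.univ.pi fun j : {j : Fin d // j ≠ i} => Set.Icc (l j) (u j),
          ∫ t in Set.Icc (l i) (u i), f (faceEmb i t z) := by
        rw [Measure.volume_eq_prod]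
        exact setIntegral_prod _ hInt

/-- 1D identity: `∫_a^b ((t-a) g' + (p+1) g) β = c (b-a)^(p+1) g(b)` when
`β t = c (t-a)^p` on `[a,b]`. -/
lemma inner_1d (a b : ℝ) (hab : a ≤ b) (p : ℕ) (c : ℝ) (g g' βt : ℝ → ℝ)
    (hg : ∀ t, HasDerivAt g (g' t) t) (hg' : Continuous g') (hβc : Continuous βt)
    (hβ : ∀ t ∈ Set.Icc a b, βt t = c * (t - a) ^ p) :
    ∫ t in Set.Icc a b, ((t - a) * g' t + ((p : ℝ) + 1) * g t) * βt t
      = c * ((b - a) ^ (p + 1) * g b) := by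
  have hgc : Continuous g :=
    continuous_iff_continuousAt.2 fun t => (hg t).continuousAt
  rw [MeasureTheory.integral_Icc_eq_integral_Ioc, ← intervalIntegral.integral_of_le hab]
  have hd : ∀ t ∈ Set.uIcc a b,
      HasDerivAt (fun s => c * ((s - a) ^ (p + 1) * g s))
        (((t - a) * g' t + ((p : ℝ) + 1) * g t) * βt t) t := by
    intro t ht
    have h1 : HasDerivAt (fun s : ℝ => (s - a) ^ (p + 1))
        (((p : ℝ) + 1) * (t - a) ^ p) t := by
      have := ((hasDerivAt_id t).sub_const a).pow (p + 1)
      simpa [Pi.pow_def] using this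
    have h2 := (h1.mul (hg t)).const_mul c
    refine h2.congr_deriv ?_
    rw [hβ t (by rwa [Set.uIcc_of_le hab] at ht)]
    ring
  have hint : IntervalIntegrable
      (fun t => ((t - a) * g' t + ((p : ℝ) + 1) * g t) * βt t) volume a b := by
    apply Continuous.intervalIntegrable
    continuity
  rw [intervalIntegral.integral_eq_sub_of_hasDerivAt hd hint]
  simp [zero_pow (Nat.succ_ne_zero p)]

/-- Weighted trace identity for boundary B-splines: on the box
`Q = [l 1, u 1] × ⋯ × [l d, u d]` with face `S = {x i = u i}`, let
`β(x) = β 1 (x 1) ⋯ β d (x d)` be a nonnegative tensor-product weight whose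
`i`-th factor is `β i (t) = C |t − l i|^p` on `[l i, u i]`, and let
`γ(x) = (x i − l i) eᵢ`. Then for every `w ∈ W^{1,1}(Q)` (stated for `C¹`
functions, dense in `W^{1,1}(Q)`):
`(∫_S wβ)/(∫_S β) − (∫_Q wβ)/(∫_Q β) = (1/(p+1)) (∫_Q (γ·∇w) β)/(∫_Q β)`. -/
theorem weighted_trace_identity (d : ℕ) (hd : 0 < d) (i : Fin d)
    (l u : Fin d → ℝ) (hlu : ∀ j, l j < u j) (p : ℕ) (hp : 0 < p)
    (C : ℝ) (hC : 0 < C) (βf : Fin d → ℝ → ℝ)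
    (hβnonneg : ∀ j, ∀ t ∈ Set.Icc (l j) (u j), 0 ≤ βf j t)
    (hβcont : ∀ j, Continuous (βf j))
    (hβi : ∀ t ∈ Set.Icc (l i) (u i), βf i t = C * |t - l i| ^ p)
    (hSpos : 0 < ∫ z in Set.univ.pi fun j : {j : Fin d // j ≠ i} =>
        Set.Icc (l j) (u j), ∏ k, βf k (faceEmb i (u i) z k))
    (hQpos : 0 < ∫ x in Set.univ.pi fun j => Set.Icc (l j) (u j),
        ∏ k, βf k (x k))
    (w : (Fin d → ℝ) → ℝ) (hw : ContDiff ℝ 1 w) :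
    (∫ z in Set.univ.pi fun j : {j : Fin d // j ≠ i} => Set.Icc (l j) (u j),
          w (faceEmb i (u i) z) * ∏ k, βf k (faceEmb i (u i) z k)) /
        (∫ z in Set.univ.pi fun j : {j : Fin d // j ≠ i} => Set.Icc (l j) (u j),
          ∏ k, βf k (faceEmb i (u i) z k))
      - (∫ x in Set.univ.pi fun j => Set.Icc (l j) (u j),
          w x * ∏ k, βf k (x k)) /
        (∫ x in Set.univ.pi fun j => Set.Icc (l j) (u j), ∏ k, βf k (x k))
      = (1 / (p + 1 : ℝ)) *
        ((∫ x in Set.univ.pi fun j => Set.Icc (l j) (u j),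
            ((x i - l i) * fderiv ℝ w x (Pi.single i 1)) * ∏ k, βf k (x k)) /
          (∫ x in Set.univ.pi fun j => Set.Icc (l j) (u j),
            ∏ k, βf k (x k))) := by
  have hab : l i ≤ u i := (hlu i).le
  have hL : (0:ℝ) < u i - l i := sub_pos.2 (hlu i)
  set q : ℝ := (p : ℝ) + 1 with hqdef
  have hq : (0:ℝ) < q := by positivity
  set Q := Set.univ.pi fun j => Set.Icc (l j) (u j) with hQdef
  set S' := Set.univ.pi fun j : {j : Fin d // j ≠ i} => Set.Icc (l j) (u j) with hSdef
  have hQcomp : IsCompact Q := isCompact_univ_pi fun j => isCompact_Icc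
  have hβprod : Continuous fun x : Fin d → ℝ => ∏ k, βf k (x k) :=
    continuous_finset_prod _ fun k _ => (hβcont k).comp (continuous_apply k)
  -- the key identity
  have key : ∀ v : (Fin d → ℝ) → ℝ, ContDiff ℝ 1 v →
      (∫ x in Q, ((x i - l i) * fderiv ℝ v x (Pi.single i 1) + q * v x) * ∏ k, βf k (x k))
        = (u i - l i) *
          ∫ z in S', v (faceEmb i (u i) z) * ∏ k, βf k (faceEmb i (u i) z k) := by
    intro v hv
    have hvd : Differentiable ℝ v := hv.differentiable one_ne_zero
    have hfd : Continuous fun x => fderiv ℝ v x (Pi.single i 1) :=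
      (hv.continuous_fderiv one_ne_zero).clm_apply continuous_const
    have hF : Continuous fun x : Fin d → ℝ =>
        ((x i - l i) * fderiv ℝ v x (Pi.single i 1) + q * v x) * ∏ k, βf k (x k) :=
      ((((continuous_apply i).sub continuous_const).mul hfd).add
        (continuous_const.mul hv.continuous)).mul hβprod
    rw [hQdef, fubini_face i l u _ hF]
    have hinner : ∀ z : {j : Fin d // j ≠ i} → ℝ,
        (∫ t in Set.Icc (l i) (u i),
          ((faceEmb i t z i - l i) * fderiv ℝ v (faceEmb i t z) (Pi.single i 1)
            + q * v (faceEmb i t z)) * ∏ k, βf k (faceEmb i t z k))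
        = (u i - l i) *
            (v (faceEmb i (u i) z) * ∏ k, βf k (faceEmb i (u i) z k)) := by
      intro z
      have hg : ∀ t : ℝ, HasDerivAt (fun s => v (faceEmb i s z))
          (fderiv ℝ v (faceEmb i t z) (Pi.single i 1)) t := fun t =>
        (hvd (faceEmb i t z)).hasFDerivAt.comp_hasDerivAt t (faceEmb_hasDerivAt i z t)
      have hg' : Continuous fun t => fderiv ℝ v (faceEmb i t z) (Pi.single i 1) :=
        hfd.comp (continuous_faceEmb_t i z)
      have h1d := inner_1d (l i) (u i) hab p
        (C * ∏ j : {j : Fin d // j ≠ i}, βf j (z j))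
        (fun s => v (faceEmb i s z))
        (fun t => fderiv ℝ v (faceEmb i t z) (Pi.single i 1))
        (fun t => βf i t * ∏ j : {j : Fin d // j ≠ i}, βf j (z j)) hg hg'
        ((hβcont i).mul continuous_const)
        (fun t ht => by
          show βf i t * _ = _
          rw [hβi t ht, abs_of_nonneg (sub_nonneg.2 ht.1)]; ring)
      calc (∫ t in Set.Icc (l i) (u i),
            ((faceEmb i t z i - l i) * fderiv ℝ v (faceEmb i t z) (Pi.single i 1)
              + q * v (faceEmb i t z)) * ∏ k, βf k (faceEmb i t z k))
          = ∫ t in Set.Icc (l i) (u i),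
              ((t - l i) * fderiv ℝ v (faceEmb i t z) (Pi.single i 1)
                + q * v (faceEmb i t z))
                * (βf i t * ∏ j : {j : Fin d // j ≠ i}, βf j (z j)) := by
            simp only [faceEmb_same, prod_faceEmb]
        _ = (C * ∏ j : {j : Fin d // j ≠ i}, βf j (z j))
              * ((u i - l i) ^ (p + 1) * v (faceEmb i (u i) z)) := h1d
        _ = (u i - l i) *
              (v (faceEmb i (u i) z) * ∏ k, βf k (faceEmb i (u i) z k)) := by
            rw [prod_faceEmb, hβi (u i) ⟨hab, le_rfl⟩,
              abs_of_nonneg (sub_nonneg.2 hab), pow_succ]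
            ring
    simp only [hinner]
    rw [integral_const_mul]
  -- apply key to w
  have hDP := key w hw
  have hDadd : (∫ x in Q, ((x i - l i) * fderiv ℝ w x (Pi.single i 1) + q * w x)
        * ∏ k, βf k (x k))
      = (∫ x in Q, ((x i - l i) * fderiv ℝ w x (Pi.single i 1)) * ∏ k, βf k (x k))
        + q * ∫ x in Q, w x * ∏ k, βf k (x k) := by
    have hfd : Continuous fun x => fderiv ℝ w x (Pi.single i 1) :=
      (hw.continuous_fderiv one_ne_zero).clm_apply continuous_const
    have h1 : IntegrableOn (fun x => ((x i - l i) * fderiv ℝ w x (Pi.single i 1))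
        * ∏ k, βf k (x k)) Q volume :=
      ((((continuous_apply i).sub continuous_const).mul hfd).mul
        hβprod).continuousOn.integrableOn_compact hQcomp
    have h2 : IntegrableOn (fun x => (q * w x) * ∏ k, βf k (x k)) Q volume :=
      ((continuous_const.mul hw.continuous).mul hβprod).continuousOn.integrableOn_compact
        hQcomp
    simp only [add_mul]
    rw [integral_add h1 h2]
    congr 1
    simp only [mul_assoc]
    exact integral_const_mul q _
  have hone := key (fun _ => (1:ℝ)) contDiff_const
  have hone' : q * (∫ x in Q, ∏ k, βf k (x k))
      = (u i - l i) * ∫ z in S', ∏ k, βf k (faceEmb i (u i) z k) := by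
    rw [← integral_const_mul]
    have hrw : (fun x : Fin d → ℝ => q * ∏ k, βf k (x k))
        = fun x => ((x i - l i) * fderiv ℝ (fun _ => (1:ℝ)) x (Pi.single i 1) + q * 1)
            * ∏ k, βf k (x k) := by
      funext x
      simp [fderiv_const]
    rw [hrw, hone]
    simp
  -- final algebra
  set A := ∫ z in S', w (faceEmb i (u i) z) * ∏ k, βf k (faceEmb i (u i) z k) with hA
  set B := ∫ z in S', ∏ k, βf k (faceEmb i (u i) z k) with hB0
  set P := ∫ x in Q, w x * ∏ k, βf k (x k) with hP
  set R := ∫ x in Q, ∏ k, βf k (x k) with hR0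
  set D := ∫ x in Q, ((x i - l i) * fderiv ℝ w x (Pi.single i 1)) * ∏ k, βf k (x k) with hD
  have h1 : D + q * P = (u i - l i) * A := by rw [← hDadd]; exact hDP
  have h2 : q * R = (u i - l i) * B := hone'
  have hB : (0:ℝ) < B := hSpos
  have hR : (0:ℝ) < R := hQpos
  have hq' : q ≠ 0 := hq.ne'
  have hB' : B ≠ 0 := hB.ne'
  have hR' : R ≠ 0 := hR.ne'
  have hgoal : A / B - P / R = 1 / q * (D / R) := by
    have e : q * (A * R - P * B) = B * D := by linear_combination A * h2 - B * h1
    field_simp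
    linear_combination e
  simpa [hqdef] using hgoal
end
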